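/- For all X, Y ∈ 𝒞 and all A ∈ 𝒜, the Hadamard product is a Ψ(𝒜)-bimodule map in the following sense: (X ⋆ Y)·Ψ(A) = X ⋆ (Y·Ψ(A)) and Ψ(A)·(X ⋆ Y) = (Ψ(A)·X) ⋆ Y. -/
import Mathlib

set_option synthInstance.maxHeartbeats 1000000
set_option maxHeartbeats 1000000

open scoped InnerProductSpace
open ContinuousLinearMap

noncomputable section

/-- `l2 G H` is the Hilbert space `ℓ²(G,H)` of square-summable `H`-valued functions on `G`. -/
abbrev l2 (G : Type) (H : Type) [NormedAddCommGroup H] : Type := lp (fun _ : G => H) 2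

/-- The Hadamard product `X ⋆ Y := V* ∘ ρ(X) ∘ F ∘ ρ(Y) ∘ V`. -/
def hadamard {H : Type} [NormedAddCommGroup H] [InnerProductSpace ℂ H] [CompleteSpace H]
    {G : Type}
    (ρ : (l2 G H →L[ℂ] l2 G H) → (l2 G (l2 G H) →L[ℂ] l2 G (l2 G H)))
    (V : l2 G H →L[ℂ] l2 G (l2 G H))
    (F : l2 G (l2 G H) →L[ℂ] l2 G (l2 G H))
    (X Y : l2 G H →L[ℂ] l2 G H) : l2 G H →L[ℂ] l2 G H :=
  adjoint V ∘L (ρ X ∘L (F ∘L (ρ Y ∘L V)))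

theorem hadamard_stmt8
    {H : Type} [NormedAddCommGroup H] [InnerProductSpace ℂ H] [CompleteSpace H]
    {G : Type} [Group G] [DecidableEq G]
    (𝒜 : StarSubalgebra ℂ (H →L[ℂ] H))
    (h𝒜 : IsClosed (𝒜 : Set (H →L[ℂ] H)))
    (hnd : Dense (↑(Submodule.span ℂ {v : H | ∃ A ∈ 𝒜, ∃ w : H, v = A w}) : Set H))
    (α : G → (𝒜 ≃⋆ₐ[ℂ] 𝒜))
    (hα1 : ∀ A, α 1 A = A)
    (hαmul : ∀ g h A, α (g * h) A = α g (α h A))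
    (Ψ : 𝒜 → (l2 G H →L[ℂ] l2 G H))
    (hΨ : ∀ (A : 𝒜) (ξ : l2 G H) (g : G),
      (Ψ A ξ : ∀ _ : G, H) g = ((α g⁻¹ A : 𝒜) : H →L[ℂ] H) ((ξ : ∀ _ : G, H) g))
    (L : G → (l2 G H →L[ℂ] l2 G H))
    (hL : ∀ (g : G) (ξ : l2 G H) (h : G),
      (L g ξ : ∀ _ : G, H) h = (ξ : ∀ _ : G, H) (g⁻¹ * h))
    (𝒞 : Set (l2 G H →L[ℂ] l2 G H))
    (h𝒞 : 𝒞 = ((StarAlgebra.adjoin ℂ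
        (Set.range Ψ ∪ Set.range L)).topologicalClosure : Set _))
    (ρ : (l2 G H →L[ℂ] l2 G H) → (l2 G (l2 G H) →L[ℂ] l2 G (l2 G H)))
    (hρ : ∀ (X : l2 G H →L[ℂ] l2 G H) (Ξ : l2 G (l2 G H)) (g : G),
      (ρ X Ξ : ∀ _ : G, l2 G H) g = X ((Ξ : ∀ _ : G, l2 G H) g))
    (V : l2 G H →L[ℂ] l2 G (l2 G H))
    (hV : ∀ (ξ : l2 G H) (g : G),
      (V ξ : ∀ _ : G, l2 G H) g = lp.single 2 g ((ξ : ∀ _ : G, H) g))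
    (F : l2 G (l2 G H) →L[ℂ] l2 G (l2 G H))
    (hF : ∀ (Ξ : l2 G (l2 G H)) (g h : G),
      ((F Ξ : ∀ _ : G, l2 G H) g : ∀ _ : G, H) h
        = ((Ξ : ∀ _ : G, l2 G H) h : ∀ _ : G, H) g)
    :
    ∀ X ∈ 𝒞, ∀ Y ∈ 𝒞, ∀ A : 𝒜,
      hadamard ρ V F X Y * Ψ A = hadamard ρ V F X (Y * Ψ A) ∧
      Ψ A * hadamard ρ V F X Y = hadamard ρ V F (Ψ A * X) Y := by
  -- adjoint V is the "diagonal" map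
  have adjV : ∀ (Ξ : l2 G (l2 G H)) (g : G),
      ((ContinuousLinearMap.adjoint V) Ξ : ∀ _ : G, H) g
        = (((Ξ : ∀ _ : G, l2 G H) g : ∀ _ : G, H) g) := by
    intro Ξ g
    apply ext_inner_left ℂ
    intro v
    have h1 : (⟪v, ((ContinuousLinearMap.adjoint V) Ξ : ∀ _ : G, H) g⟫_ℂ)
        = ⟪lp.single 2 g v, (ContinuousLinearMap.adjoint V) Ξ⟫_ℂ := by
      rw [lp.inner_single_left]
    rw [h1, ContinuousLinearMap.adjoint_inner_right]
    have h2 : V (lp.single 2 g v) = lp.single 2 g (lp.single 2 g v) := by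
      apply lp.ext
      funext h
      rw [hV]
      by_cases hh : h = g
      · subst hh; simp [lp.single_apply_self]
      · rw [lp.single_apply_ne _ _ _ hh, lp.single_apply_ne _ _ _ hh]
        apply lp.ext; funext k; simp [lp.single_apply]
    rw [h2, lp.inner_single_left, lp.inner_single_left]
  -- Ψ A commutes with the diagonal embedding V
  have key : ∀ (A : 𝒜) (ξ : l2 G H) (g : G),
      Ψ A (lp.single 2 g ((ξ : ∀ _ : G, H) g))
        = lp.single 2 g ((Ψ A ξ : ∀ _ : G, H) g) := by
    intro A ξ g
    apply lp.ext
    funext h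
    rw [hΨ]
    by_cases hh : h = g
    · subst hh
      rw [lp.single_apply_self, lp.single_apply_self, hΨ]
    · rw [lp.single_apply_ne _ _ _ hh, lp.single_apply_ne _ _ _ hh, map_zero]
  intro X hX Y hY A
  constructor
  · refine ContinuousLinearMap.ext fun ξ => ?_
    simp only [ContinuousLinearMap.mul_apply, hadamard, ContinuousLinearMap.comp_apply]
    have hmain : ρ Y (V (Ψ A ξ)) = ρ (Y * Ψ A) (V ξ) := by
      apply lp.ext
      funext g
      rw [hρ, hρ, hV, hV, ContinuousLinearMap.mul_apply, key]
    rw [hmain]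
  · refine ContinuousLinearMap.ext fun ξ => ?_
    apply lp.ext
    funext g
    simp only [ContinuousLinearMap.mul_apply, hadamard, ContinuousLinearMap.comp_apply]
    rw [hΨ, adjV, adjV, hρ, hρ, ContinuousLinearMap.mul_apply, hΨ]
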